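/- arXiv:2602.06668 — 4 statements merged into one kernel-verified Lean document; each statement's English description precedes it below -/
import Mathlib

section
/- Let σ(x) = Px + a be a nontrivial affine permutation of F_q^n (i.e., (P, a) ≠ (I, 0)). Then the number of orbits of the cyclic group generated by σ acting on F_q^n is at most (q^n + q^(n-1))/2 = ((q+1)/(2q))·q^n. -/
theorem stmt3 {K : Type*} [Field K] [Fintype K] (n : ℕ) (hn : 1 ≤ n)
    (P : Matrix (Fin n) (Fin n) K) (hP : IsUnit P) (a : Fin n → K)
    (hnt : ¬(P = 1 ∧ a = 0))
    (σ : Equiv.Perm (Fin n → K)) (hσ : ∀ x, σ x = P.mulVec x + a) :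
    (Nat.card (MulAction.orbitRel.Quotient (Subgroup.zpowers σ) (Fin n → K)) : ℚ) ≤
      ((Fintype.card K : ℚ) ^ n + (Fintype.card K : ℚ) ^ (n - 1)) / 2 ∧
    ((Fintype.card K : ℚ) ^ n + (Fintype.card K : ℚ) ^ (n - 1)) / 2 =
      ((Fintype.card K + 1) / (2 * Fintype.card K)) * (Fintype.card K : ℚ) ^ n := by
  classical
  have hq : 1 ≤ Fintype.card K := Fintype.card_pos
  have hq0 : (Fintype.card K : ℚ) ≠ 0 := by positivity
  obtain ⟨m, rfl⟩ : ∃ m, n = m + 1 := ⟨n - 1, (Nat.succ_pred_eq_of_pos hn).symm⟩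
  have hsub : m + 1 - 1 = m := rfl
  constructor
  · -- main inequality
    -- fixed points of σ
    let Fx := {x : Fin (m + 1) → K // σ x = x}
    have hF : Fintype.card Fx ≤ Fintype.card K ^ m := by
      by_cases hne : Nonempty Fx
      · obtain ⟨x0, hx0⟩ := hne
        -- P ≠ 1
        have hP1 : P ≠ 1 := by
          intro h
          subst h
          rw [hσ, Matrix.one_mulVec] at hx0
          exact hnt ⟨rfl, by simpa using congrArg (· - x0) hx0⟩
        -- injection into kernel of (P - 1)
        let f : Fx → LinearMap.ker (Matrix.mulVecLin (P - 1)) := fun x =>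
          ⟨x.1 - x0, by
            have h1 : P.mulVec x.1 + a = x.1 := by rw [← hσ]; exact x.2
            have h2 : P.mulVec x0 + a = x0 := by rw [← hσ]; exact hx0
            have : (P - 1).mulVec (x.1 - x0) = 0 := by
              rw [Matrix.sub_mulVec, Matrix.mulVec_sub, Matrix.mulVec_sub,
                Matrix.one_mulVec, Matrix.one_mulVec]
              have hx : P.mulVec x.1 = x.1 - a := eq_sub_of_add_eq h1
              have hx0' : P.mulVec x0 = x0 - a := eq_sub_of_add_eq h2
              rw [hx, hx0']; abel
            rw [LinearMap.mem_ker, Matrix.mulVecLin_apply]; exact this⟩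
        have hfinj : Function.Injective f := by
          intro x y hxy
          have := congrArg Subtype.val hxy
          have : (x.1 : Fin (m + 1) → K) = y.1 := by
            simpa [f, sub_left_inj] using this
          exact Subtype.ext this
        have h1 : Fintype.card Fx ≤ Fintype.card (LinearMap.ker (Matrix.mulVecLin (P - 1))) :=
          Fintype.card_le_of_injective f hfinj
        -- kernel is a proper subspace
        have hker : LinearMap.ker (Matrix.mulVecLin (P - 1)) ≠ ⊤ := by
          intro h
          apply hP1
          have hz : ∀ v : Fin (m + 1) → K, (P - 1).mulVec v = 0 := by
            intro v
            have : v ∈ LinearMap.ker (Matrix.mulVecLin (P - 1)) := h ▸ Submodule.mem_top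
            rw [LinearMap.mem_ker, Matrix.mulVecLin_apply] at this; exact this
          have : P - 1 = 0 := by
            ext i j
            have := congrFun (hz (Pi.single j 1)) i
            simpa [Matrix.mulVec_single] using this
          have := sub_eq_zero.mp this
          exact this
        have hrank : Module.finrank K (LinearMap.ker (Matrix.mulVecLin (P - 1))) ≤ m := by
          have hlt : Module.finrank K (LinearMap.ker (Matrix.mulVecLin (P - 1))) <
              Module.finrank K (Fin (m + 1) → K) :=
            Submodule.finrank_lt hker
          rw [Module.finrank_fin_fun] at hlt
          omega
        have hcard : Fintype.card (LinearMap.ker (Matrix.mulVecLin (P - 1))) =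
            Fintype.card K ^ Module.finrank K (LinearMap.ker (Matrix.mulVecLin (P - 1))) :=
          Module.card_eq_pow_finrank
        calc Fintype.card Fx ≤ _ := h1
          _ = _ := hcard
          _ ≤ Fintype.card K ^ m := Nat.pow_le_pow_right hq hrank
      · have : Fintype.card Fx = 0 := by
          simpa [Fintype.card_eq_zero_iff] using hne
        omega
    -- Burnside-free counting
    set Q := MulAction.orbitRel.Quotient (Subgroup.zpowers σ) (Fin (m + 1) → K) with hQ
    have key : 2 * Fintype.card Q ≤ Fintype.card K ^ (m + 1) + Fintype.card Fx := by
      have hcardα : Fintype.card (Fin (m + 1) → K) = ∑ ω : Q, Fintype.card ω.orbit := by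
        rw [Fintype.card_congr (MulAction.selfEquivSigmaOrbits' (Subgroup.zpowers σ) (Fin (m + 1) → K)), Fintype.card_sigma]
      have hstep : ∀ ω : Q, 2 ≤ Fintype.card ω.orbit +
          (if Fintype.card ω.orbit = 1 then 1 else 0) := by
        intro ω
        have hpos : 0 < Fintype.card ω.orbit := by
          have : Nonempty ω.orbit := (MulAction.orbitRel.Quotient.nonempty_orbit ω).to_subtype
          exact Fintype.card_pos
        by_cases h : Fintype.card ω.orbit = 1
        · simp [h]
        · simp only [h, if_false, add_zero]
          omega
      have hsum : 2 * Fintype.card Q ≤ ∑ ω : Q, (Fintype.card ω.orbit +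
          (if Fintype.card ω.orbit = 1 then 1 else 0)) := by
        calc 2 * Fintype.card Q = ∑ _ω : Q, 2 := by
              simp [Finset.sum_const, mul_comm]
          _ ≤ _ := Finset.sum_le_sum fun ω _ => hstep ω
      rw [Finset.sum_add_distrib] at hsum
      have hfix : (∑ ω : Q, (if Fintype.card ω.orbit = 1 then 1 else 0)) ≤
          Fintype.card Fx := by
        have hrw : (∑ ω : Q, (if Fintype.card ω.orbit = 1 then 1 else 0)) =
            Fintype.card {ω : Q // Fintype.card ω.orbit = 1} := by
          rw [Fintype.card_subtype, ← Finset.sum_filter]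
          simp
        rw [hrw]
        have hfixrep : ∀ ω : Q, Fintype.card ω.orbit = 1 →
            σ (Quotient.out ω) = Quotient.out ω := by
          intro ω hω
          have horb : ω.orbit = MulAction.orbit (Subgroup.zpowers σ) ω.out :=
            MulAction.orbitRel.Quotient.orbit_eq_orbit_out ω Quotient.out_eq'
          obtain ⟨y, hy⟩ := Fintype.card_eq_one_iff.mp hω
          have h1 : ω.out ∈ ω.orbit := by
            rw [horb]; exact MulAction.mem_orbit_self _
          have h2 : σ (ω.out) ∈ ω.orbit := by
            rw [horb]
            exact ⟨⟨σ, Subgroup.mem_zpowers σ⟩, rfl⟩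
          have := (hy ⟨_, h2⟩).trans (hy ⟨_, h1⟩).symm
          exact congrArg Subtype.val this
        refine Fintype.card_le_of_injective
          (fun ω => (⟨ω.1.out, hfixrep ω.1 ω.2⟩ : Fx)) ?_
        intro ω₁ ω₂ h
        have := congrArg Subtype.val h
        exact Subtype.ext (Quotient.out_injective this)
      have hα' : Fintype.card (Fin (m + 1) → K) = Fintype.card K ^ (m + 1) := by
        simp [Fintype.card_fun]
      omega
    have h2 : (Nat.card Q : ℚ) ≤ ((Fintype.card K : ℚ) ^ (m + 1) + (Fintype.card K : ℚ) ^ m) / 2 := by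
      rw [Nat.card_eq_fintype_card]
      rw [le_div_iff₀ (by norm_num : (0:ℚ) < 2)]
      have : 2 * Fintype.card Q ≤ Fintype.card K ^ (m + 1) + Fintype.card K ^ m :=
        le_trans key (by omega)
      calc (Fintype.card Q : ℚ) * 2 = ((2 * Fintype.card Q : ℕ) : ℚ) := by push_cast; ring
        _ ≤ _ := by exact_mod_cast this
    simpa [hsub] using h2
  · rw [hsub, pow_succ]
    field_simp
end

section
/- Let g = (P, a, Q, b) be a nontrivial element of the EA-group Γ = AGL(n, q) × AGL(m, q), acting on functions F : F_q^n → F_q^m by (g·F)(x) = Q·F(Px + a) + b. Then the number of functions F fixed by g is at most q^(c·m·q^n), where c = max{(q+1)/(2q), 1 - 1/m} < 1. -/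
lemma aux_affine {K : Type*} [Field K] [Fintype K] {k : ℕ} (hk : 1 ≤ k)
    (M : Matrix (Fin k) (Fin k) K) (v : Fin k → K) (h : ¬(M = 1 ∧ v = 0)) :
    Nat.card {y : Fin k → K | M.mulVec y + v = y} ≤ Fintype.card K ^ (k - 1) := by
  classical
  by_cases hne : {y : Fin k → K | M.mulVec y + v = y}.Nonempty
  · obtain ⟨y₀, hy₀⟩ := hne
    simp only [Set.mem_setOf_eq] at hy₀
    have hM : M ≠ 1 := by
      rintro rfl
      rw [Matrix.one_mulVec] at hy₀
      exact h ⟨rfl, add_eq_left.mp hy₀⟩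
    set f := Matrix.mulVecLin (M - 1) with hf
    have hker : LinearMap.ker f ≠ ⊤ := by
      intro htop
      apply hM
      ext i j
      have h1 : Pi.single j (1:K) ∈ LinearMap.ker f := htop ▸ Submodule.mem_top
      have h2 := congrFun (LinearMap.mem_ker.mp h1) i
      simp only [Matrix.mulVecLin_apply, Matrix.mulVec_single, Matrix.sub_apply, mul_one,
        Pi.zero_apply, hf, Pi.smul_apply, MulOpposite.op_one, one_smul, Matrix.col_apply] at h2
      have := sub_eq_zero.mp h2
      simpa using this
    -- injection from the set into the kernel
    have hinj : Nat.card {y : Fin k → K | M.mulVec y + v = y} ≤ Nat.card (LinearMap.ker f) := by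
      apply Nat.card_le_card_of_injective
        (fun y => ⟨(y : Fin k → K) - y₀, by
          have hy := y.2
          simp only [Set.mem_setOf_eq] at hy
          simp only [LinearMap.mem_ker, hf, Matrix.mulVecLin_apply, Matrix.sub_mulVec,
            Matrix.one_mulVec, Matrix.mulVec_sub]
          calc M.mulVec (↑y) - ↑y - (M.mulVec y₀ - y₀)
              = (M.mulVec ↑y + v) - ↑y - ((M.mulVec y₀ + v) - y₀) := by abel
            _ = 0 := by rw [hy, hy₀]; abel⟩)
      intro x y hxy
      have := congrArg Subtype.val hxy
      simp only [sub_left_inj] at this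
      exact Subtype.ext this
    refine hinj.trans ?_
    have : Nat.card (LinearMap.ker f) = Fintype.card K ^ (Module.finrank K (LinearMap.ker f)) := by
      rw [Nat.card_eq_fintype_card]
      exact Module.card_eq_pow_finrank
    rw [this]
    apply Nat.pow_le_pow_right (Fintype.card_pos)
    have hlt : Module.finrank K (LinearMap.ker f) < Module.finrank K (Fin k → K) :=
      Submodule.finrank_lt hker
    rw [Module.finrank_pi, Fintype.card_fin] at hlt
    omega
  · rw [Set.not_nonempty_iff_eq_empty] at hne
    simp [hne]

def sameCycleSetoid {α : Type*} (σ : Equiv.Perm α) : Setoid α :=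
  ⟨σ.SameCycle, ⟨Equiv.Perm.SameCycle.refl σ, fun h => h.symm, fun h h' => h.trans h'⟩⟩

lemma orbit_le {α : Type*} [Fintype α] (σ : Equiv.Perm α) :
    2 * Nat.card (Quotient (sameCycleSetoid σ)) ≤
      Fintype.card α + Nat.card {x : α | σ x = x} := by
  classical
  set s := sameCycleSetoid σ with hs
  have h1 : Fintype.card α =
      ∑ c : Quotient s, (Finset.univ.filter (fun x : α => Quotient.mk s x = c)).card := by
    rw [← Finset.card_univ]
    exact Finset.card_eq_sum_card_fiberwise (fun x _ => Finset.mem_univ _)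
  have h2 : Nat.card {x : α | σ x = x} =
      ∑ c : Quotient s,
        ((Finset.univ.filter (fun x : α => σ x = x)).filter
          (fun x => Quotient.mk s x = c)).card := by
    rw [Nat.card_eq_fintype_card, Fintype.card_subtype]
    exact Finset.card_eq_sum_card_fiberwise (fun x _ => Finset.mem_univ _)
  have hcc : ∀ c : Quotient s,
      2 ≤ (Finset.univ.filter (fun x : α => Quotient.mk s x = c)).card +
        ((Finset.univ.filter (fun x : α => σ x = x)).filter
          (fun x => Quotient.mk s x = c)).card := by
    intro c
    obtain ⟨x, rfl⟩ := Quotient.exists_rep c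
    by_cases hx : σ x = x
    · have m1 : x ∈ Finset.univ.filter (fun y : α => Quotient.mk s y = Quotient.mk s x) := by
        simp
      have m2 : x ∈ (Finset.univ.filter (fun y : α => σ y = y)).filter
          (fun y => Quotient.mk s y = Quotient.mk s x) := by simp [hx]
      have c1 := Finset.card_pos.mpr ⟨x, m1⟩
      have c2 := Finset.card_pos.mpr ⟨x, m2⟩
      omega
    · have m1 : x ∈ Finset.univ.filter (fun y : α => Quotient.mk s y = Quotient.mk s x) := by
        simp
      have m2 : σ x ∈ Finset.univ.filter (fun y : α => Quotient.mk s y = Quotient.mk s x) := by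
        simp only [Finset.mem_filter, Finset.mem_univ, true_and]
        exact Quotient.sound ⟨-1, by simp⟩
      have : 1 < (Finset.univ.filter (fun y : α => Quotient.mk s y = Quotient.mk s x)).card :=
        Finset.one_lt_card.mpr ⟨x, m1, σ x, m2, fun h => hx h.symm⟩
      omega
  calc 2 * Nat.card (Quotient s) = ∑ _c : Quotient s, 2 := by
        rw [Finset.sum_const, Finset.card_univ, Nat.card_eq_fintype_card]; ring
    _ ≤ ∑ c : Quotient s,
        ((Finset.univ.filter (fun x : α => Quotient.mk s x = c)).card +
          ((Finset.univ.filter (fun x : α => σ x = x)).filter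
            (fun x => Quotient.mk s x = c)).card) :=
        Finset.sum_le_sum (fun c _ => hcc c)
    _ = _ := by rw [Finset.sum_add_distrib, ← h1, ← h2]

lemma fix_card_le {α β : Type*} [Finite α] [Finite β] (σ : Equiv.Perm α) (e : Equiv.Perm β) :
    Nat.card {F : α → β | ∀ x, e (F (σ x)) = F x} ≤
      Nat.card β ^ Nat.card (Quotient (sameCycleSetoid σ)) := by
  classical
  set s := sameCycleSetoid σ with hs
  have key : ∀ F G : α → β, (∀ x, e (F (σ x)) = F x) → (∀ x, e (G (σ x)) = G x) →
      ∀ x y : α, σ.SameCycle x y → F y = G y → F x = G x := by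
    intro F G hF hG x y hsc hxy
    obtain ⟨i, hi⟩ := hsc
    have base : ∀ z, F (σ z) = G (σ z) ↔ F z = G z := by
      intro z
      rw [← hF z, ← hG z, EmbeddingLike.apply_eq_iff_eq]
    have claim : ∀ i : ℤ, ∀ x : α, F ((σ ^ i) x) = G ((σ ^ i) x) ↔ F x = G x := by
      intro i
      induction i using Int.induction_on with
      | zero => simp
      | succ j ih =>
          intro x
          have h1 : (σ ^ ((j : ℤ) + 1)) x = (σ ^ (j : ℤ)) (σ x) := by
            rw [zpow_add_one]; rfl
          rw [h1, ih (σ x), base]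
      | pred j ih =>
          intro x
          have h1 : (σ ^ (-(j : ℤ) - 1)) x = (σ ^ (-(j : ℤ))) (σ⁻¹ x) := by
            rw [zpow_sub_one]; rfl
          rw [h1, ih (σ⁻¹ x), ← base (σ⁻¹ x), ← Equiv.Perm.mul_apply, mul_inv_cancel, Equiv.Perm.one_apply]
    rw [← hi] at hxy
    exact (claim i x).mp hxy
  have hinj : Function.Injective
      (fun (F : {F : α → β | ∀ x, e (F (σ x)) = F x}) =>
        (fun c : Quotient s => (F : α → β) c.out)) := by
    intro F G h
    apply Subtype.ext
    funext x
    have h0 : σ.SameCycle ((Quotient.mk s x).out) x := Quotient.mk_out x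
    have hx : σ.SameCycle x ((Quotient.mk s x).out) := h0.symm
    exact key F G F.2 G.2 x _ hx (congrFun h (Quotient.mk s x))
  calc Nat.card {F : α → β | ∀ x, e (F (σ x)) = F x}
      ≤ Nat.card (Quotient s → β) := Nat.card_le_card_of_injective _ hinj
    _ = Nat.card β ^ Nat.card (Quotient s) := Nat.card_fun

noncomputable def affEquiv {K : Type*} [Field K] [Fintype K] {k : ℕ} (M : Matrix (Fin k) (Fin k) K)
    (hM : IsUnit M) (v : Fin k → K) : Equiv.Perm (Fin k → K) where
  toFun := fun x => M.mulVec x + v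
  invFun := fun y => M⁻¹.mulVec (y - v)
  left_inv := fun x => by
    have hd : IsUnit M.det := (Matrix.isUnit_iff_isUnit_det M).mp hM
    show M⁻¹.mulVec (M.mulVec x + v - v) = x
    rw [add_sub_cancel_right, Matrix.mulVec_mulVec, Matrix.nonsing_inv_mul _ hd,
      Matrix.one_mulVec]
  right_inv := fun y => by
    have hd : IsUnit M.det := (Matrix.isUnit_iff_isUnit_det M).mp hM
    show M.mulVec (M⁻¹.mulVec (y - v)) + v = y
    rw [Matrix.mulVec_mulVec, Matrix.mul_nonsing_inv _ hd, Matrix.one_mulVec, sub_add_cancel]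



theorem stmt8 {K : Type*} [Field K] [Fintype K] (n m : ℕ) (hn : 1 ≤ n) (hm : 1 ≤ m)
    (P : Matrix (Fin n) (Fin n) K) (hP : IsUnit P) (a : Fin n → K)
    (Q : Matrix (Fin m) (Fin m) K) (hQ : IsUnit Q) (b : Fin m → K)
    (hnt : ¬(P = 1 ∧ a = 0 ∧ Q = 1 ∧ b = 0)) :
    (Nat.card {F : (Fin n → K) → (Fin m → K) |
        ∀ x, Q.mulVec (F (P.mulVec x + a)) + b = F x} : ℝ) ≤
      (Fintype.card K : ℝ) ^
        ((max (((Fintype.card K : ℝ) + 1) / (2 * (Fintype.card K : ℝ))) (1 - 1 / (m : ℝ)))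
          * (m : ℝ) * (Fintype.card K : ℝ) ^ n) ∧
    max (((Fintype.card K : ℝ) + 1) / (2 * (Fintype.card K : ℝ))) (1 - 1 / (m : ℝ)) < 1 := by
  classical
  have hq1 : (1:ℝ) < (Fintype.card K : ℝ) := by exact_mod_cast Fintype.one_lt_card
  have hm0 : (0:ℝ) < (m:ℝ) := by exact_mod_cast hm
  have hmne : (m:ℝ) ≠ 0 := ne_of_gt hm0
  refine ⟨?_, ?_⟩
  swap
  · apply max_lt
    · rw [div_lt_one (by positivity)]; linarith
    · have : (0:ℝ) < 1 / (m:ℝ) := by positivity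
      linarith
  set q := Fintype.card K with hqdef
  have hq2 : 2 ≤ q := Fintype.one_lt_card
  by_cases hPa : P = 1 ∧ a = 0
  · obtain ⟨hP1, ha0⟩ := hPa
    subst hP1; subst ha0
    have hQb : ¬(Q = 1 ∧ b = 0) := fun h => hnt ⟨rfl, rfl, h.1, h.2⟩
    have hS := aux_affine hm Q b hQb
    have hcount : Nat.card {F : (Fin n → K) → (Fin m → K) |
        ∀ x, Q.mulVec (F ((1 : Matrix (Fin n) (Fin n) K).mulVec x + 0)) + b = F x}
        ≤ (q ^ (m-1)) ^ (q ^ n) := by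
      have step : Nat.card {F : (Fin n → K) → (Fin m → K) |
          ∀ x, Q.mulVec (F ((1 : Matrix (Fin n) (Fin n) K).mulVec x + 0)) + b = F x}
          ≤ Nat.card ((Fin n → K) → {y : Fin m → K | Q.mulVec y + b = y}) := by
        apply Nat.card_le_card_of_injective
          (fun F => fun x => ⟨(F : (Fin n → K) → (Fin m → K)) x, by
            have hFx := F.2 x
            simpa [Matrix.one_mulVec] using hFx⟩)
        intro F G h
        apply Subtype.ext; funext x
        exact congrArg Subtype.val (congrFun h x)
      refine step.trans ?_
      rw [Nat.card_fun]
      have hα : Nat.card (Fin n → K) = q ^ n := by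
        rw [Nat.card_fun, Nat.card_eq_fintype_card, Nat.card_eq_fintype_card, Fintype.card_fin]
      rw [hα]
      exact Nat.pow_le_pow_left hS _
    calc (Nat.card {F : (Fin n → K) → (Fin m → K) |
          ∀ x, Q.mulVec (F ((1 : Matrix (Fin n) (Fin n) K).mulVec x + 0)) + b = F x} : ℝ)
        ≤ (((q ^ (m-1)) ^ (q ^ n) : ℕ) : ℝ) := by exact_mod_cast hcount
      _ = (q:ℝ) ^ ((((m-1) * q ^ n : ℕ)) : ℝ) := by
          rw [Real.rpow_natCast]; push_cast; rw [← pow_mul]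
      _ ≤ (q:ℝ) ^ (max (((q:ℝ) + 1) / (2 * (q:ℝ))) (1 - 1 / (m : ℝ)) * (m:ℝ) * (q:ℝ) ^ n) := by
          rw [Real.rpow_le_rpow_left_iff hq1]
          have h1 : (((m-1) * q ^ n : ℕ) : ℝ) = ((m:ℝ) - 1) * (q:ℝ) ^ n := by
            rw [Nat.cast_mul, Nat.cast_pow, Nat.cast_sub hm, Nat.cast_one]
          rw [h1]
          have h2 : ((m:ℝ) - 1) * (q:ℝ) ^ n = (1 - 1 / (m:ℝ)) * (m:ℝ) * (q:ℝ) ^ n := by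
            field_simp
          rw [h2, mul_assoc, mul_assoc]
          exact mul_le_mul_of_nonneg_right (le_max_right _ _) (by positivity)
  · set σ := affEquiv P hP a with hσ
    set e := affEquiv Q hQ b with he
    have hfix := fix_card_le σ e
    have hsets : {F : (Fin n → K) → (Fin m → K) | ∀ x, Q.mulVec (F (P.mulVec x + a)) + b = F x}
        = {F : (Fin n → K) → (Fin m → K) | ∀ x, e (F (σ x)) = F x} := rfl
    set k := Nat.card (Quotient (sameCycleSetoid σ)) with hk
    have horb := orbit_le σ
    have hfixed : Nat.card {x : Fin n → K | σ x = x} ≤ q ^ (n-1) := by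
      have hss : {x : Fin n → K | σ x = x} = {x : Fin n → K | P.mulVec x + a = x} := rfl
      rw [hss]; exact aux_affine hn P a hPa
    have hcardα : Fintype.card (Fin n → K) = q ^ n := by
      rw [← Nat.card_eq_fintype_card, Nat.card_fun, Nat.card_eq_fintype_card,
        Nat.card_eq_fintype_card, Fintype.card_fin]
    have h2k : 2 * k ≤ q ^ n + q ^ (n-1) := by
      rw [hcardα] at horb
      exact horb.trans (Nat.add_le_add_left hfixed _)
    have hβ : Nat.card (Fin m → K) = q ^ m := by
      rw [Nat.card_fun, Nat.card_eq_fintype_card, Nat.card_eq_fintype_card, Fintype.card_fin]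
    have hcount : Nat.card {F : (Fin n → K) → (Fin m → K) |
        ∀ x, Q.mulVec (F (P.mulVec x + a)) + b = F x} ≤ (q ^ m) ^ k := by
      rw [hsets, ← hβ]; exact hfix
    have e1 : q ^ (n-1) * q = q ^ n := by rw [← pow_succ, Nat.sub_add_cancel hn]
    have natineq : (m * k) * (2 * q) ≤ (q + 1) * (m * q ^ n) := by
      calc (m * k) * (2 * q) = m * ((2 * k) * q) := by ring
        _ ≤ m * ((q ^ n + q ^ (n-1)) * q) :=
            Nat.mul_le_mul_left m (Nat.mul_le_mul_right q h2k)
        _ = (q + 1) * (m * q ^ n) := by rw [add_mul, e1]; ring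
    calc (Nat.card {F : (Fin n → K) → (Fin m → K) |
          ∀ x, Q.mulVec (F (P.mulVec x + a)) + b = F x} : ℝ)
        ≤ (((q ^ m) ^ k : ℕ) : ℝ) := by exact_mod_cast hcount
      _ = (q:ℝ) ^ (((m * k : ℕ)) : ℝ) := by
          rw [Real.rpow_natCast]; push_cast; rw [← pow_mul]
      _ ≤ (q:ℝ) ^ (max (((q:ℝ) + 1) / (2 * (q:ℝ))) (1 - 1 / (m : ℝ)) * (m:ℝ) * (q:ℝ) ^ n) := by
          rw [Real.rpow_le_rpow_left_iff hq1]
          have hr : ((m * k : ℕ) : ℝ) * (2 * (q:ℝ)) ≤ ((q:ℝ) + 1) * ((m:ℝ) * (q:ℝ) ^ n) := by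
            exact_mod_cast natineq
          have hle : ((m * k : ℕ) : ℝ) ≤ ((q:ℝ) + 1) / (2 * (q:ℝ)) * ((m:ℝ) * (q:ℝ) ^ n) := by
            rw [div_mul_eq_mul_div, le_div_iff₀ (by positivity)]
            linarith
          refine hle.trans ?_
          rw [mul_assoc]
          exact mul_le_mul_of_nonneg_right (le_max_left _ _) (by positivity)
end

section
/- The number of functions F : F_q^n → F_q^m whose EA-stabilizer is nontrivial is at most |AGL(n, q)| · |AGL(m, q)| · q^(c·m·q^n), where c = max{(q+1)/(2q), 1 - 1/m}. -/
open MulAction in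
lemma lemA {X Y : Type*} [Finite X] [Finite Y] (σ : Equiv.Perm X) (τ : Equiv.Perm Y) :
    Nat.card {F : X → Y // ∀ x, τ (F (σ x)) = F x} ≤
      Nat.card Y ^ Nat.card (orbitRel.Quotient (Subgroup.zpowers σ) X) := by
  have key : ∀ (F : X → Y), (∀ x, τ (F (σ x)) = F x) → ∀ (k : ℤ) (x : X),
      (τ ^ k) (F ((σ ^ k) x)) = F x := by
    intro F hF k
    induction k using Int.induction_on with
    | zero => simp
    | succ k ih =>
      intro x
      have hσ2 : (σ ^ ((k : ℤ) + 1)) x = σ ((σ ^ (k : ℤ)) x) := by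
        rw [add_comm, zpow_one_add]; rfl
      rw [hσ2, zpow_add_one, Equiv.Perm.mul_apply, hF, ih]
    | pred k ih =>
      intro x
      have hF'' : ∀ w, τ⁻¹ (F (σ⁻¹ w)) = F w := by
        intro w
        have h0 := hF (σ⁻¹ w)
        rw [show σ (σ⁻¹ w) = w from σ.apply_symm_apply w] at h0
        rw [← h0, show τ⁻¹ (τ (F w)) = F w from τ.symm_apply_apply _]
      have hσ : (σ ^ (-(k : ℤ) - 1)) x = σ⁻¹ ((σ ^ (-(k : ℤ))) x) := by
        rw [sub_eq_add_neg, add_comm, zpow_add, zpow_neg_one]; rfl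
      rw [hσ, zpow_sub_one, Equiv.Perm.mul_apply, hF'', ih]
  classical
  have hinj : Function.Injective
      (fun F : {F : X → Y // ∀ x, τ (F (σ x)) = F x} =>
        fun ω : orbitRel.Quotient (Subgroup.zpowers σ) X => F.1 ω.out) := by
    intro F F' h
    ext x
    set ω : orbitRel.Quotient (Subgroup.zpowers σ) X := Quotient.mk'' x with hω
    have h1 : (Quotient.mk'' ω.out : orbitRel.Quotient (Subgroup.zpowers σ) X) = Quotient.mk'' x :=
      (Quotient.out_eq' ω).trans hω
    have hrel : ω.out ∈ orbit (Subgroup.zpowers σ) x := by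
      have := Quotient.eq''.mp h1
      rwa [orbitRel_apply] at this
    obtain ⟨⟨g, k, hk⟩, hg⟩ := hrel
    have hgx : (σ ^ k) x = ω.out := by
      simp only [← hk] at hg
      exact hg
    have e1 : F.1 x = (τ ^ k) (F.1 ω.out) := by
      rw [← hgx]; exact (key F.1 F.2 k x).symm
    have e2 : F'.1 x = (τ ^ k) (F'.1 ω.out) := by
      rw [← hgx]; exact (key F'.1 F'.2 k x).symm
    rw [e1, e2]; exact congrArg _ (congrFun h ω)
  calc Nat.card {F : X → Y // ∀ x, τ (F (σ x)) = F x}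
      ≤ Nat.card (orbitRel.Quotient (Subgroup.zpowers σ) X → Y) :=
        Nat.card_le_card_of_injective _ hinj
    _ = Nat.card Y ^ Nat.card (orbitRel.Quotient (Subgroup.zpowers σ) X) := Nat.card_fun
open MulAction in
lemma lemB {X : Type*} [Finite X] (σ : Equiv.Perm X) :
    2 * Nat.card (orbitRel.Quotient (Subgroup.zpowers σ) X) ≤
      Nat.card {x : X // σ x = x} + Nat.card X := by
  classical
  set Ω := orbitRel.Quotient (Subgroup.zpowers σ) X with hΩ
  have hmkout : ∀ ω : Ω, (Quotient.mk'' ω.out : Ω) = ω := fun ω => Quotient.out_eq' ω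
  have hmk : ∀ ω : Ω, (Quotient.mk'' (σ ω.out) : Ω) = ω := by
    intro ω
    have h1 : σ ω.out ∈ orbit (Subgroup.zpowers σ) ω.out :=
      ⟨⟨σ, Subgroup.mem_zpowers σ⟩, rfl⟩
    have h2 : (Quotient.mk'' (σ ω.out) : Ω) = Quotient.mk'' ω.out :=
      Quotient.sound' ((orbitRel_apply).mpr h1)
    rw [h2, hmkout]
  have hout : ∀ ω ω' : Ω, ω.out = ω'.out → ω = ω' := by
    intro ω ω' h
    rw [← hmkout ω, ← hmkout ω', h]
  let f : Ω × Bool → {x : X // σ x = x} ⊕ X := fun p =>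
    if p.2 then Sum.inr p.1.out
    else if h : σ p.1.out = p.1.out then Sum.inl ⟨p.1.out, h⟩ else Sum.inr (σ p.1.out)
  have hinj : Function.Injective f := by
    rintro ⟨ω, b⟩ ⟨ω', b'⟩ hff
    cases b <;> cases b' <;>
      simp only [f, if_true, if_false, Bool.false_eq_true] at hff
    · -- both false
      by_cases h : σ ω.out = ω.out
      · by_cases h' : σ ω'.out = ω'.out
        · rw [dif_pos h, dif_pos h'] at hff
          have : ω.out = ω'.out := congrArg Subtype.val (Sum.inl.inj hff)
          rw [hout _ _ this]
        · rw [dif_pos h, dif_neg h'] at hff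
          exact absurd hff (by simp)
      · by_cases h' : σ ω'.out = ω'.out
        · rw [dif_neg h, dif_pos h'] at hff
          exact absurd hff (by simp)
        · rw [dif_neg h, dif_neg h'] at hff
          have hx : σ ω.out = σ ω'.out := Sum.inr.inj hff
          have : ω = ω' := by rw [← hmk ω, ← hmk ω', hx]
          rw [this]
    · -- false, true
      by_cases h : σ ω.out = ω.out
      · rw [dif_pos h] at hff; exact absurd hff (by simp)
      · rw [dif_neg h] at hff
        have hx : σ ω.out = ω'.out := Sum.inr.inj hff
        have he : ω = ω' := by rw [← hmk ω, hx, hmkout]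
        subst he
        exact absurd hx h
    · -- true, false
      by_cases h' : σ ω'.out = ω'.out
      · rw [dif_pos h'] at hff; exact absurd hff (by simp)
      · rw [dif_neg h'] at hff
        have hx : ω.out = σ ω'.out := Sum.inr.inj hff
        have he : ω = ω' := by rw [← hmkout ω, hx, hmk]
        subst he
        exact absurd hx.symm h'
    · -- both true
      rw [hout _ _ (Sum.inr.inj hff)]
  have hcard := Nat.card_le_card_of_injective f hinj
  rw [Nat.card_prod, Nat.card_sum] at hcard
  have hb : Nat.card Bool = 2 := by simp [Nat.card_eq_fintype_card]
  rw [hb, mul_comm] at hcard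
  exact hcard

lemma lemC {K : Type*} [Field K] [Fintype K] {n : ℕ} (hn : 1 ≤ n)
    (P : Matrix (Fin n) (Fin n) K) (a : Fin n → K) (h : ¬(P = 1 ∧ a = 0)) :
    Nat.card {x : Fin n → K // P.mulVec x + a = x} ≤ Fintype.card K ^ (n - 1) := by
  classical
  rcases isEmpty_or_nonempty {x : Fin n → K // P.mulVec x + a = x} with he | hne
  · rw [Nat.card_of_isEmpty]
    exact Nat.zero_le _
  obtain ⟨x0, hx0⟩ := hne.some
  by_cases hP : P = 1
  · subst hP
    rw [Matrix.one_mulVec] at hx0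
    have ha : a = 0 := by rwa [add_eq_left] at hx0
    exact absurd ⟨rfl, ha⟩ h
  · set L := (P - 1).mulVecLin with hL
    have hker : ∀ x : {x : Fin n → K // P.mulVec x + a = x}, L (x.1 - x0) = 0 := by
      intro x
      have hx := x.2
      have e : ∀ y : Fin n → K, P.mulVec y + a = y → L y = -a := by
        intro y hy
        have h2 : P.mulVec y - y = -a := by
          rw [eq_sub_of_add_eq hy]; abel
        simpa only [hL, Matrix.mulVecLin_apply, Matrix.sub_mulVec, Matrix.one_mulVec] using h2
      rw [map_sub, e _ hx, e _ hx0, sub_self]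
    have hinj : Function.Injective
        (fun x : {x : Fin n → K // P.mulVec x + a = x} =>
          (⟨x.1 - x0, LinearMap.mem_ker.mpr (hker x)⟩ : LinearMap.ker L)) := by
      intro x y hxy
      have : x.1 - x0 = y.1 - x0 := congrArg Subtype.val hxy
      exact Subtype.ext (sub_left_injective this)
    have hcard := Nat.card_le_card_of_injective _ hinj
    have hne_top : LinearMap.ker L ≠ ⊤ := by
      intro htop
      apply hP
      have hz : ∀ v, (P - 1).mulVec v = 0 := by
        intro v
        have : v ∈ LinearMap.ker L := htop ▸ Submodule.mem_top
        simpa [hL, Matrix.sub_mulVec] using this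
      ext i j
      have := congrFun (hz (Pi.single j 1)) i
      rw [Matrix.mulVec_single_one] at this
      simpa [Matrix.sub_apply, sub_eq_zero] using this
    have hrank : Module.finrank K (LinearMap.ker L) ≤ n - 1 := by
      have hlt : Module.finrank K (LinearMap.ker L) < Module.finrank K (Fin n → K) :=
        Submodule.finrank_lt hne_top
      rw [Module.finrank_fintype_fun_eq_card, Fintype.card_fin] at hlt
      omega
    calc Nat.card {x : Fin n → K // P.mulVec x + a = x} ≤ Nat.card (LinearMap.ker L) := hcard
      _ = Fintype.card K ^ Module.finrank K (LinearMap.ker L) := by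
          rw [Nat.card_eq_fintype_card, Module.card_eq_pow_finrank (K := K)]
      _ ≤ Fintype.card K ^ (n - 1) := Nat.pow_le_pow_right Fintype.card_pos hrank

noncomputable def affinePerm {K : Type*} [Field K] [Fintype K] {n : ℕ}
    (P : Matrix (Fin n) (Fin n) K) (a : Fin n → K) (hP : IsUnit P) : Equiv.Perm (Fin n → K) :=
  Equiv.ofBijective (fun x => P.mulVec x + a) (by
    classical
    have hinj : Function.Injective (fun x : Fin n → K => P.mulVec x + a) := by
      intro x y hxy
      exact (Matrix.mulVec_injective_iff_isUnit.mpr hP) (add_right_cancel hxy)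
    exact Finite.injective_iff_bijective.mp hinj)

open MulAction in
lemma lemD {K : Type*} [Field K] [Fintype K] {n m : ℕ} (hn : 1 ≤ n) (hm : 1 ≤ m)
    (P : Matrix (Fin n) (Fin n) K) (a : Fin n → K) (Q : Matrix (Fin m) (Fin m) K) (b : Fin m → K)
    (hP : IsUnit P) (hQ : IsUnit Q) (hnt : ¬(P = 1 ∧ a = 0 ∧ Q = 1 ∧ b = 0)) :
    (Nat.card {F : (Fin n → K) → (Fin m → K) // ∀ x, Q.mulVec (F (P.mulVec x + a)) + b = F x} : ℝ)
      ≤ (Fintype.card K : ℝ) ^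
        ((max (((Fintype.card K : ℝ) + 1) / (2 * (Fintype.card K : ℝ))) (1 - 1 / (m : ℝ)))
          * (m : ℝ) * (Fintype.card K : ℝ) ^ n) := by
  classical
  have hq2 : (2 : ℕ) ≤ Fintype.card K := Fintype.one_lt_card
  have hq2R : (2 : ℝ) ≤ (Fintype.card K : ℝ) := by exact_mod_cast hq2
  have hq1R : (1 : ℝ) ≤ (Fintype.card K : ℝ) := by linarith
  have hq0 : (Fintype.card K : ℝ) ≠ 0 := by linarith
  have hmR : (1 : ℝ) ≤ (m : ℝ) := by exact_mod_cast hm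
  set q := Fintype.card K with hqdef
  set c := max (((q : ℝ) + 1) / (2 * (q : ℝ))) (1 - 1 / (m : ℝ)) with hc
  have hqnpos : (0 : ℝ) ≤ (q : ℝ) ^ n := by positivity
  by_cases htriv : P = 1 ∧ a = 0
  · obtain ⟨hP1, ha0⟩ := htriv
    subst hP1; subst ha0
    have hQb : ¬(Q = 1 ∧ b = 0) := fun ⟨h1, h2⟩ => hnt ⟨rfl, rfl, h1, h2⟩
    have hinj : Function.Injective
        (fun F : {F : (Fin n → K) → (Fin m → K) //
            ∀ x, Q.mulVec (F ((1 : Matrix (Fin n) (Fin n) K).mulVec x + 0)) + b = F x} =>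
          (fun x => (⟨F.1 x, by
            have := F.2 x
            rwa [Matrix.one_mulVec, add_zero] at this⟩ :
              {y : Fin m → K // Q.mulVec y + b = y}))) := by
      intro F F' hFF'
      apply Subtype.ext
      funext x
      exact congrArg Subtype.val (congrFun hFF' x)
    have h1 := Nat.card_le_card_of_injective _ hinj
    rw [Nat.card_fun] at h1
    have h2 : Nat.card {y : Fin m → K // Q.mulVec y + b = y} ≤ q ^ (m - 1) :=
      lemC hm Q b hQb
    have hX : Nat.card (Fin n → K) = q ^ n := by
      rw [Nat.card_fun, Nat.card_eq_fintype_card, Nat.card_eq_fintype_card, Fintype.card_fin]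
    have h3 : Nat.card {F : (Fin n → K) → (Fin m → K) //
        ∀ x, Q.mulVec (F ((1 : Matrix (Fin n) (Fin n) K).mulVec x + 0)) + b = F x}
        ≤ (q ^ (m - 1)) ^ (q ^ n) := by
      rw [← hX]
      exact h1.trans (Nat.pow_le_pow_left h2 _)
    calc (Nat.card {F : (Fin n → K) → (Fin m → K) //
            ∀ x, Q.mulVec (F ((1 : Matrix (Fin n) (Fin n) K).mulVec x + 0)) + b = F x} : ℝ)
        ≤ (((q ^ (m - 1)) ^ (q ^ n) : ℕ) : ℝ) := by exact_mod_cast h3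
      _ = (q : ℝ) ^ (((m - 1) * q ^ n : ℕ) : ℝ) := by
          rw [Real.rpow_natCast]; push_cast [← pow_mul]; ring
      _ ≤ (q : ℝ) ^ (c * (m : ℝ) * (q : ℝ) ^ n) := by
          apply Real.rpow_le_rpow_of_exponent_le hq1R
          have hm1 : ((m - 1 : ℕ) : ℝ) = (m : ℝ) - 1 := by
            have : (1 : ℕ) ≤ m := hm
            push_cast [Nat.cast_sub this]; ring
          have he : ((m - 1 : ℕ) : ℝ) = (1 - 1 / (m : ℝ)) * (m : ℝ) := by
            rw [hm1]; field_simp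
          rw [Nat.cast_mul, he]
          push_cast
          exact mul_le_mul_of_nonneg_right
            (mul_le_mul_of_nonneg_right (le_max_right _ _) (by linarith)) hqnpos
  · set σ := affinePerm P a hP with hσ
    set τ := affinePerm Q b hQ with hτ
    set NΩ := Nat.card (orbitRel.Quotient (Subgroup.zpowers σ) (Fin n → K)) with hNΩ
    have h1 : Nat.card {F : (Fin n → K) → (Fin m → K) //
        ∀ x, Q.mulVec (F (P.mulVec x + a)) + b = F x} ≤ Nat.card (Fin m → K) ^ NΩ :=
      lemA σ τ
    have hY : Nat.card (Fin m → K) = q ^ m := by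
      rw [Nat.card_fun, Nat.card_eq_fintype_card, Nat.card_eq_fintype_card, Fintype.card_fin]
    have hX : Nat.card (Fin n → K) = q ^ n := by
      rw [Nat.card_fun, Nat.card_eq_fintype_card, Nat.card_eq_fintype_card, Fintype.card_fin]
    have h2 : 2 * NΩ ≤ Nat.card {x : Fin n → K // σ x = x} + Nat.card (Fin n → K) := lemB σ
    have h3 : Nat.card {x : Fin n → K // σ x = x} ≤ q ^ (n - 1) := lemC hn P a htriv
    have h4 : 2 * NΩ ≤ q ^ (n - 1) + q ^ n := by
      rw [hX] at h2
      exact h2.trans (Nat.add_le_add_right h3 _)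
    have h5 : (NΩ : ℝ) ≤ (((q : ℝ) + 1) / (2 * (q : ℝ))) * (q : ℝ) ^ n := by
      have h4R : ((2 * NΩ : ℕ) : ℝ) ≤ ((q ^ (n - 1) + q ^ n : ℕ) : ℝ) := Nat.cast_le.mpr h4
      push_cast at h4R
      have hqn1 : (q : ℝ) ^ (n - 1) * (q : ℝ) = (q : ℝ) ^ n := by
        rw [← pow_succ, Nat.sub_add_cancel hn]
      rw [div_mul_eq_mul_div, le_div_iff₀ (by linarith)]
      nlinarith [hqn1]
    calc (Nat.card {F : (Fin n → K) → (Fin m → K) //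
            ∀ x, Q.mulVec (F (P.mulVec x + a)) + b = F x} : ℝ)
        ≤ (((q ^ m) ^ NΩ : ℕ) : ℝ) := by rw [← hY]; exact_mod_cast h1
      _ = (q : ℝ) ^ ((m * NΩ : ℕ) : ℝ) := by
          rw [Real.rpow_natCast]; push_cast [← pow_mul]; ring
      _ ≤ (q : ℝ) ^ (c * (m : ℝ) * (q : ℝ) ^ n) := by
          apply Real.rpow_le_rpow_of_exponent_le hq1R
          push_cast
          have hcge : (((q : ℝ) + 1) / (2 * (q : ℝ))) ≤ c := le_max_left _ _
          have h7 : (((q : ℝ) + 1) / (2 * (q : ℝ))) * (q : ℝ) ^ n ≤ c * (q : ℝ) ^ n :=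
            mul_le_mul_of_nonneg_right hcge hqnpos
          calc (m : ℝ) * (NΩ : ℝ)
              ≤ (m : ℝ) * ((((q : ℝ) + 1) / (2 * (q : ℝ))) * (q : ℝ) ^ n) :=
                mul_le_mul_of_nonneg_left h5 (by linarith)
            _ ≤ (m : ℝ) * (c * (q : ℝ) ^ n) := mul_le_mul_of_nonneg_left h7 (by linarith)
            _ = c * (m : ℝ) * (q : ℝ) ^ n := by ring

lemma lemE {K : Type*} [Field K] [Fintype K] (n : ℕ) :
    Nat.card {P : Matrix (Fin n) (Fin n) K // IsUnit P} =
      ∏ i ∈ Finset.range n, (Fintype.card K ^ n - Fintype.card K ^ i) := by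
  have e : {P : Matrix (Fin n) (Fin n) K // IsUnit P} ≃ GL (Fin n) K :=
    { toFun := fun P => P.2.unit
      invFun := fun u => ⟨u, u.isUnit⟩
      left_inv := fun P => Subtype.ext P.2.unit_spec
      right_inv := fun u => Units.ext u.isUnit.unit_spec }
  rw [Nat.card_congr e, Matrix.card_GL_field]
  exact Fin.prod_univ_eq_prod_range (fun i => Fintype.card K ^ n - Fintype.card K ^ i) n

theorem stmt10 {K : Type*} [Field K] [Fintype K] (n m : ℕ) (hn : 1 ≤ n) (hm : 1 ≤ m) :
    (Nat.card {F : (Fin n → K) → (Fin m → K) |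
        ∃ (P : Matrix (Fin n) (Fin n) K) (a : Fin n → K)
          (Q : Matrix (Fin m) (Fin m) K) (b : Fin m → K),
          IsUnit P ∧ IsUnit Q ∧ ¬(P = 1 ∧ a = 0 ∧ Q = 1 ∧ b = 0) ∧
          ∀ x, Q.mulVec (F (P.mulVec x + a)) + b = F x} : ℝ) ≤
      ((Fintype.card K ^ n * ∏ i ∈ Finset.range n, (Fintype.card K ^ n - Fintype.card K ^ i) : ℕ) : ℝ) *
      ((Fintype.card K ^ m * ∏ i ∈ Finset.range m, (Fintype.card K ^ m - Fintype.card K ^ i) : ℕ) : ℝ) *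
      (Fintype.card K : ℝ) ^
        ((max (((Fintype.card K : ℝ) + 1) / (2 * (Fintype.card K : ℝ))) (1 - 1 / (m : ℝ)))
          * (m : ℝ) * (Fintype.card K : ℝ) ^ n) := by
  classical
  set B : ℝ := (Fintype.card K : ℝ) ^
        ((max (((Fintype.card K : ℝ) + 1) / (2 * (Fintype.card K : ℝ))) (1 - 1 / (m : ℝ)))
          * (m : ℝ) * (Fintype.card K : ℝ) ^ n) with hB
  have hBpos : 0 ≤ B := Real.rpow_nonneg (by positivity) _
  set S : Set ((Fin n → K) → (Fin m → K)) := {F : (Fin n → K) → (Fin m → K) |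
        ∃ (P : Matrix (Fin n) (Fin n) K) (a : Fin n → K)
          (Q : Matrix (Fin m) (Fin m) K) (b : Fin m → K),
          IsUnit P ∧ IsUnit Q ∧ ¬(P = 1 ∧ a = 0 ∧ Q = 1 ∧ b = 0) ∧
          ∀ x, Q.mulVec (F (P.mulVec x + a)) + b = F x} with hS
  let Tup := (Matrix (Fin n) (Fin n) K × (Fin n → K)) × (Matrix (Fin m) (Fin m) K × (Fin m → K))
  let cond : Tup → Prop := fun t =>
    IsUnit t.1.1 ∧ IsUnit t.2.1 ∧ ¬(t.1.1 = 1 ∧ t.1.2 = 0 ∧ t.2.1 = 1 ∧ t.2.2 = 0)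
  let T := {t : Tup // cond t}
  let fixT : Tup → Type _ := fun t =>
    {F : (Fin n → K) → (Fin m → K) // ∀ x, t.2.1.mulVec (F (t.1.1.mulVec x + t.1.2)) + t.2.2 = F x}
  have hCH : ∀ F : ↥S, ∃ t : Tup, cond t ∧
      ∀ x, t.2.1.mulVec (F.1 (t.1.1.mulVec x + t.1.2)) + t.2.2 = F.1 x := by
    rintro ⟨F, hF⟩
    obtain ⟨P, a, Q, b, h1, h2, h3, h4⟩ := hF
    exact ⟨((P, a), (Q, b)), ⟨h1, h2, h3⟩, h4⟩
  let Φ : ↥S → Σ t : T, fixT t.1 := fun F =>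
    ⟨⟨(hCH F).choose, (hCH F).choose_spec.1⟩, ⟨F.1, (hCH F).choose_spec.2⟩⟩
  have hΦinj : Function.Injective Φ := by
    intro F F' h
    apply Subtype.ext
    exact congrArg (fun p : Σ t : T, fixT t.1 => p.2.1) h
  have step1 : Nat.card ↥S ≤ Nat.card (Σ t : T, fixT t.1) :=
    Nat.card_le_card_of_injective Φ hΦinj
  have step2 : (Nat.card (Σ t : T, fixT t.1) : ℝ) ≤ (Nat.card T : ℝ) * B := by
    letI : Fintype T := Fintype.ofFinite T
    letI : ∀ t : T, Fintype (fixT t.1) := fun t => Fintype.ofFinite _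
    rw [Nat.card_eq_fintype_card (α := Σ t : T, fixT t.1), Fintype.card_sigma,
      Nat.card_eq_fintype_card (α := T)]
    push_cast
    calc (∑ t : T, (Fintype.card (fixT t.1) : ℝ))
        ≤ ∑ _t : T, B := by
          apply Finset.sum_le_sum
          intro t _
          have hd := lemD (K := K) hn hm t.1.1.1 t.1.1.2 t.1.2.1 t.1.2.2 t.2.1 t.2.2.1 t.2.2.2
          rw [Nat.card_eq_fintype_card] at hd
          exact hd
      _ = (Fintype.card T : ℝ) * B := by
          rw [Finset.sum_const, Finset.card_univ, nsmul_eq_mul]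
  have step3 : Nat.card T ≤
      (Fintype.card K ^ n * ∏ i ∈ Finset.range n, (Fintype.card K ^ n - Fintype.card K ^ i)) *
      (Fintype.card K ^ m * ∏ i ∈ Finset.range m, (Fintype.card K ^ m - Fintype.card K ^ i)) := by
    have hinj : Function.Injective (fun t : T =>
        (((⟨t.1.1.1, t.2.1⟩ : {P : Matrix (Fin n) (Fin n) K // IsUnit P}), t.1.1.2),
         ((⟨t.1.2.1, t.2.2.1⟩ : {Q : Matrix (Fin m) (Fin m) K // IsUnit Q}), t.1.2.2))) := by
      intro t t' h
      simp only [Prod.mk.injEq, Subtype.mk.injEq] at h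
      obtain ⟨⟨h1, h2⟩, h3, h4⟩ := h
      apply Subtype.ext
      exact Prod.ext (Prod.ext h1 h2) (Prod.ext h3 h4)
    have hc := Nat.card_le_card_of_injective _ hinj
    rw [Nat.card_prod, Nat.card_prod, Nat.card_prod, lemE n, lemE m] at hc
    have hX : Nat.card (Fin n → K) = Fintype.card K ^ n := by
      rw [Nat.card_fun, Nat.card_eq_fintype_card, Nat.card_eq_fintype_card, Fintype.card_fin]
    have hYc : Nat.card (Fin m → K) = Fintype.card K ^ m := by
      rw [Nat.card_fun, Nat.card_eq_fintype_card, Nat.card_eq_fintype_card, Fintype.card_fin]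
    rw [hX, hYc] at hc
    calc Nat.card T ≤ _ := hc
      _ = _ := by ring
  calc (Nat.card ↥S : ℝ)
      ≤ (Nat.card (Σ t : T, fixT t.1) : ℝ) := Nat.cast_le.mpr step1
    _ ≤ (Nat.card T : ℝ) * B := step2
    _ ≤ (((Fintype.card K ^ n * ∏ i ∈ Finset.range n,
            (Fintype.card K ^ n - Fintype.card K ^ i)) *
          (Fintype.card K ^ m * ∏ i ∈ Finset.range m,
            (Fintype.card K ^ m - Fintype.card K ^ i)) : ℕ) : ℝ) * B := by
        apply mul_le_mul_of_nonneg_right _ hBpos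
        exact Nat.cast_le.mpr step3
    _ = ((Fintype.card K ^ n * ∏ i ∈ Finset.range n,
            (Fintype.card K ^ n - Fintype.card K ^ i) : ℕ) : ℝ) *
        ((Fintype.card K ^ m * ∏ i ∈ Finset.range m,
            (Fintype.card K ^ m - Fintype.card K ^ i) : ℕ) : ℝ) * B := by
        rw [Nat.cast_mul]
end

section
/- The number of EA-equivalence classes of functions F : F_q^n → F_q^m satisfies q^(m·q^n)/|Γ| ≤ N ≤ q^(m·q^n)/|Γ| + |Γ| · q^(c·m·q^n), where Γ = AGL(n, q) × AGL(m, q) and c = max{(q+1)/(2q), 1 - 1/m}. -/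
open Matrix

private abbrev EAT (K : Type*) [Field K] (n m : ℕ) :=
  ((Matrix (Fin n) (Fin n) K)ˣ × (Fin n → K)) × ((Matrix (Fin m) (Fin m) K)ˣ × (Fin m → K))

private def EOne (K : Type*) [Field K] (n m : ℕ) : EAT K n m := ((1, 0), (1, 0))

private def EAct {K : Type*} [Field K] {n m : ℕ} (g : EAT K n m)
    (F : (Fin n → K) → (Fin m → K)) : (Fin n → K) → (Fin m → K) :=
  fun x => (g.2.1 : Matrix (Fin m) (Fin m) K).mulVec
    (F ((g.1.1 : Matrix (Fin n) (Fin n) K).mulVec x + g.1.2)) + g.2.2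

private def EMul {K : Type*} [Field K] {n m : ℕ} (g h : EAT K n m) : EAT K n m :=
  ((h.1.1 * g.1.1, (h.1.1 : Matrix (Fin n) (Fin n) K).mulVec g.1.2 + h.1.2),
   (g.2.1 * h.2.1, (g.2.1 : Matrix (Fin m) (Fin m) K).mulVec h.2.2 + g.2.2))

private def EInv {K : Type*} [Field K] {n m : ℕ} (g : EAT K n m) : EAT K n m :=
  ((g.1.1⁻¹, -((g.1.1⁻¹ : (Matrix (Fin n) (Fin n) K)ˣ) : Matrix (Fin n) (Fin n) K).mulVec g.1.2),
   (g.2.1⁻¹, -((g.2.1⁻¹ : (Matrix (Fin m) (Fin m) K)ˣ) : Matrix (Fin m) (Fin m) K).mulVec g.2.2))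

private lemma eact_one {K : Type*} [Field K] {n m : ℕ} (F : (Fin n → K) → (Fin m → K)) :
    EAct (EOne K n m) F = F := by
  funext x
  simp [EAct, EOne, Matrix.one_mulVec]

private lemma eact_mul {K : Type*} [Field K] {n m : ℕ} (g h : EAT K n m)
    (F : (Fin n → K) → (Fin m → K)) : EAct g (EAct h F) = EAct (EMul g h) F := by
  funext x
  simp [EAct, EMul, Matrix.mulVec_add, Matrix.mulVec_mulVec, Units.val_mul, add_assoc]

private lemma eact_inv {K : Type*} [Field K] {n m : ℕ} (g : EAT K n m)
    (F : (Fin n → K) → (Fin m → K)) : EAct (EInv g) (EAct g F) = F := by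
  funext x
  simp only [EAct, EInv, Matrix.mulVec_add, Matrix.mulVec_neg, Matrix.mulVec_mulVec,
    ← Units.val_mul, inv_mul_cancel, mul_inv_cancel, Units.val_one, Matrix.one_mulVec,
    neg_add_cancel_right, add_neg_cancel_right]

private lemma eact_cancel {K : Type*} [Field K] {n m : ℕ} {F : (Fin n → K) → (Fin m → K)}
    (hstab : ∀ k : EAT K n m, EAct k F = F → k = EOne K n m)
    {g h : EAT K n m} (hgh : EAct g F = EAct h F) : g = h := by
  have h1 : EAct (EMul (EInv h) g) F = F := by
    rw [← eact_mul, hgh, eact_inv]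
  have h2 := hstab _ h1
  obtain ⟨⟨P, a⟩, Q, b⟩ := g
  obtain ⟨⟨P', a'⟩, Q', b'⟩ := h
  simp only [EMul, EInv, EOne, Prod.mk.injEq] at h2
  obtain ⟨⟨hP, ha⟩, hQ, hb⟩ := h2
  have hPP : P = P' := mul_inv_eq_one.mp hP
  subst hPP
  have hQQ : Q' = Q := inv_mul_eq_one.mp hQ
  subst hQQ
  simp only [Matrix.mulVec_neg, Matrix.mulVec_mulVec, ← Units.val_mul, mul_inv_cancel,
    Units.val_one, Matrix.one_mulVec] at ha
  have haa : a = a' := (neg_add_eq_zero.mp ha).symm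
  have h3 := add_neg_eq_zero.mp hb
  have hbb : b = b' :=
    Matrix.mulVec_injective_iff_isUnit.mpr (Q'⁻¹ : (Matrix (Fin m) (Fin m) K)ˣ).isUnit h3
  rw [haa, hbb]

private lemma aux_affine_card {K : Type*} [Field K] [Fintype K] (d : ℕ)
    (M : Matrix (Fin d) (Fin d) K) (b : Fin d → K) (hM : ¬ (M = 1 ∧ b = 0)) :
    Nat.card {x : Fin d → K // M.mulVec x + b = x} ≤ Fintype.card K ^ (d - 1) := by
  classical
  by_cases h1 : M = 1
  · subst h1
    have hb : b ≠ 0 := fun h => hM ⟨rfl, h⟩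
    have hempty : IsEmpty {x : Fin d → K // (1 : Matrix (Fin d) (Fin d) K).mulVec x + b = x} := by
      refine ⟨fun y => hb ?_⟩
      have h2 := y.2
      rw [Matrix.one_mulVec] at h2
      exact add_eq_left.mp h2
    rw [Nat.card_of_isEmpty]
    exact Nat.zero_le _
  · have he : ∀ x : Fin d → K,
        (M.mulVec x + b = x) ↔ (((1 : Matrix (Fin d) (Fin d) K) - M).mulVec x = b) := by
      intro x
      rw [Matrix.sub_mulVec, Matrix.one_mulVec]
      constructor
      · intro h; exact sub_eq_of_eq_add' h.symm
      · intro h; rw [← h]; abel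
    set N := (1 : Matrix (Fin d) (Fin d) K) - M with hNdef
    have hN0 : N ≠ 0 := sub_ne_zero.mpr fun h => h1 h.symm
    have hker : LinearMap.ker N.mulVecLin ≠ ⊤ := by
      intro hk
      apply hN0
      have hz : ∀ x, N.mulVec x = 0 := by
        intro x
        have hx : x ∈ LinearMap.ker N.mulVecLin := hk ▸ Submodule.mem_top
        simpa [Matrix.mulVecLin_apply] using hx
      ext i j
      have h2 := hz (Pi.single j 1)
      rw [Matrix.mulVec_single_one] at h2
      simpa [Matrix.transpose_apply] using congrFun h2 i
    have hrank : Module.finrank K (LinearMap.ker N.mulVecLin) ≤ d - 1 := by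
      have hlt : Module.finrank K (LinearMap.ker N.mulVecLin) < Module.finrank K (Fin d → K) :=
        Submodule.finrank_lt hker
      rw [Module.finrank_fin_fun] at hlt
      omega
    by_cases hex : ∃ x₀ : Fin d → K, N.mulVec x₀ = b
    · obtain ⟨x₀, hx₀⟩ := hex
      have hinj : Function.Injective
          (fun y : {x : Fin d → K // M.mulVec x + b = x} =>
            (⟨y.1 - x₀, LinearMap.mem_ker.mpr (by
              rw [Matrix.mulVecLin_apply, Matrix.mulVec_sub, (he y.1).mp y.2, hx₀, sub_self])⟩ :
              LinearMap.ker N.mulVecLin)) := by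
        intro y y' h
        apply Subtype.ext
        have h3 : y.1 - x₀ = y'.1 - x₀ := congrArg Subtype.val h
        exact sub_left_inj.mp h3
      calc Nat.card {x : Fin d → K // M.mulVec x + b = x}
          = Fintype.card {x : Fin d → K // M.mulVec x + b = x} := Nat.card_eq_fintype_card
        _ ≤ Fintype.card (LinearMap.ker N.mulVecLin) := Fintype.card_le_of_injective _ hinj
        _ = Fintype.card K ^ Module.finrank K (LinearMap.ker N.mulVecLin) := Module.card_eq_pow_finrank
        _ ≤ Fintype.card K ^ (d - 1) := Nat.pow_le_pow_right Fintype.card_pos hrank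
    · have hempty : IsEmpty {x : Fin d → K // M.mulVec x + b = x} :=
        ⟨fun y => hex ⟨y.1, (he y.1).mp y.2⟩⟩
      rw [Nat.card_of_isEmpty]
      exact Nat.zero_le _

private lemma aux_orbit_bound {X : Type*} [Fintype X] (σ : Equiv.Perm X) :
    2 * Nat.card (Quotient (Equiv.Perm.SameCycle.setoid σ)) ≤
      Fintype.card X + Nat.card {x : X // σ x = x} := by
  classical
  set sc := Equiv.Perm.SameCycle.setoid σ with hsc
  have h1 : Fintype.card X = ∑ c : Quotient sc, Fintype.card {x : X // Quotient.mk sc x = c} := by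
    rw [← Fintype.card_sigma]
    exact (Fintype.card_congr (Equiv.sigmaFiberEquiv (Quotient.mk sc))).symm
  have h2 : Fintype.card {x : X // σ x = x}
      = ∑ c : Quotient sc,
          Fintype.card {y : {x : X // σ x = x} // Quotient.mk sc y.1 = c} := by
    rw [← Fintype.card_sigma]
    exact (Fintype.card_congr (Equiv.sigmaFiberEquiv
      (fun y : {x : X // σ x = x} => Quotient.mk sc y.1))).symm
  have key : ∀ c : Quotient sc,
      2 ≤ Fintype.card {x : X // Quotient.mk sc x = c}
        + Fintype.card {y : {x : X // σ x = x} // Quotient.mk sc y.1 = c} := by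
    intro c
    obtain ⟨x, rfl⟩ := Quotient.exists_rep c
    by_cases hx : σ x = x
    · have e1 : 0 < Fintype.card {x' : X // Quotient.mk sc x' = Quotient.mk sc x} :=
        Fintype.card_pos_iff.mpr ⟨⟨x, rfl⟩⟩
      have e2 : 0 < Fintype.card
          {y : {x' : X // σ x' = x'} // Quotient.mk sc y.1 = Quotient.mk sc x} :=
        Fintype.card_pos_iff.mpr ⟨⟨⟨x, hx⟩, rfl⟩⟩
      omega
    · have e1 : 1 < Fintype.card {x' : X // Quotient.mk sc x' = Quotient.mk sc x} := by
        rw [Fintype.one_lt_card_iff_nontrivial]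
        refine ⟨⟨⟨x, rfl⟩, ⟨σ x, Quotient.sound (Equiv.Perm.SameCycle.symm ⟨1, by simp⟩)⟩, ?_⟩⟩
        intro hcon
        exact hx (congrArg Subtype.val hcon).symm
      omega
  have hQ : 2 * Nat.card (Quotient sc) = ∑ _c : Quotient sc, 2 := by
    rw [Finset.sum_const, Finset.card_univ, smul_eq_mul, Nat.card_eq_fintype_card, mul_comm]
  rw [hQ, h1, Nat.card_eq_fintype_card, h2, ← Finset.sum_add_distrib]
  exact Finset.sum_le_sum fun c _ => key c

private lemma aux_fix_inj {X Y : Type*} [Finite X] (σ : Equiv.Perm X)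
    (φ : Y → Y) (hφ : Function.Injective φ)
    (F G : X → Y) (hF : ∀ x, F x = φ (F (σ x))) (hG : ∀ x, G x = φ (G (σ x)))
    (h : ∀ c : Quotient (Equiv.Perm.SameCycle.setoid σ), F c.out = G c.out) :
    F = G := by
  have key : ∀ (i : ℕ) (z : X), F z = G z → F ((σ ^ i) z) = G ((σ ^ i) z) := by
    intro i
    induction i with
    | zero => intro z hz; simpa using hz
    | succ i ih =>
      intro z hz
      have h1 : F (σ z) = G (σ z) := hφ (by rw [← hF z, ← hG z, hz])
      simpa [pow_succ, Equiv.Perm.mul_apply] using ih (σ z) h1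
  funext x
  set c := Quotient.mk (Equiv.Perm.SameCycle.setoid σ) x with hc
  have hmkeq : Quotient.mk (Equiv.Perm.SameCycle.setoid σ) c.out
      = Quotient.mk (Equiv.Perm.SameCycle.setoid σ) x := by
    rw [Quotient.out_eq]
  have hout : σ.SameCycle c.out x := Quotient.exact hmkeq
  obtain ⟨i, -, hi⟩ := hout.exists_pow_eq'
  rw [← hi]
  exact key i c.out (h c)
theorem stmt12 {K : Type*} [Field K] [Fintype K] (n m : ℕ) (hn : 1 ≤ n) (hm : 1 ≤ m)
    (s : Setoid ((Fin n → K) → (Fin m → K)))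
    (hs : ∀ F G : (Fin n → K) → (Fin m → K), s.r F G ↔
      ∃ (P : Matrix (Fin n) (Fin n) K) (a : Fin n → K)
        (Q : Matrix (Fin m) (Fin m) K) (b : Fin m → K),
        IsUnit P ∧ IsUnit Q ∧ ∀ x, G x = Q.mulVec (F (P.mulVec x + a)) + b) :
    (Fintype.card K : ℝ) ^ (m * Fintype.card K ^ n) /
      (((Fintype.card K ^ n * ∏ i ∈ Finset.range n, (Fintype.card K ^ n - Fintype.card K ^ i)) *
        (Fintype.card K ^ m * ∏ i ∈ Finset.range m, (Fintype.card K ^ m - Fintype.card K ^ i)) : ℕ) : ℝ)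
      ≤ (Nat.card (Quotient s) : ℝ) ∧
    (Nat.card (Quotient s) : ℝ) ≤
      (Fintype.card K : ℝ) ^ (m * Fintype.card K ^ n) /
        (((Fintype.card K ^ n * ∏ i ∈ Finset.range n, (Fintype.card K ^ n - Fintype.card K ^ i)) *
          (Fintype.card K ^ m * ∏ i ∈ Finset.range m, (Fintype.card K ^ m - Fintype.card K ^ i)) : ℕ) : ℝ) +
      (((Fintype.card K ^ n * ∏ i ∈ Finset.range n, (Fintype.card K ^ n - Fintype.card K ^ i)) *
        (Fintype.card K ^ m * ∏ i ∈ Finset.range m, (Fintype.card K ^ m - Fintype.card K ^ i)) : ℕ) : ℝ) *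
        (Fintype.card K : ℝ) ^
          ((max (((Fintype.card K : ℝ) + 1) / (2 * (Fintype.card K : ℝ))) (1 - 1 / (m : ℝ)))
            * (m : ℝ) * (Fintype.card K : ℝ) ^ n) := by
  classical
  letI : DecidableEq K := Classical.decEq K
  letI : DecidableEq (EAT K n m) := Classical.decEq _
  set q := Fintype.card K with hqdef
  set c : ℝ := max (((q : ℝ) + 1) / (2 * (q : ℝ))) (1 - 1 / (m : ℝ)) with hcdef
  have hq2 : 1 < q := Fintype.one_lt_card
  have hq1 : (1 : ℝ) ≤ (q : ℝ) := by exact_mod_cast hq2.le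
  have hq0R : (0 : ℝ) < (q : ℝ) := by exact_mod_cast hq2.trans_le' (by norm_num)
  -- cardinalities
  have hX : Fintype.card (Fin n → K) = q ^ n := by simp [Fintype.card_fun, hqdef]
  have hY : Fintype.card (Fin m → K) = q ^ m := by simp [Fintype.card_fun, hqdef]
  have hA : Fintype.card ((Fin n → K) → (Fin m → K)) = q ^ (m * q ^ n) := by
    rw [Fintype.card_fun, hX, hY, ← pow_mul]
  have hGL : ∀ d : ℕ, Fintype.card ((Matrix (Fin d) (Fin d) K)ˣ)
      = ∏ i ∈ Finset.range d, (q ^ d - q ^ i) := by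
    intro d
    have h := Matrix.card_GL_field (𝔽 := K) d
    rw [Nat.card_eq_fintype_card] at h
    calc Fintype.card ((Matrix (Fin d) (Fin d) K)ˣ)
        = Fintype.card (GL (Fin d) K) := Fintype.card_congr (Equiv.refl _)
      _ = ∏ i : Fin d, (q ^ d - q ^ (i : ℕ)) := h
      _ = ∏ i ∈ Finset.range d, (q ^ d - q ^ i) :=
          Fin.prod_univ_eq_prod_range (fun i => q ^ d - q ^ i) d
  have hT : Fintype.card (EAT K n m)
      = (q ^ n * ∏ i ∈ Finset.range n, (q ^ n - q ^ i)) *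
        (q ^ m * ∏ i ∈ Finset.range m, (q ^ m - q ^ i)) := by
    rw [show Fintype.card (EAT K n m)
        = (Fintype.card ((Matrix (Fin n) (Fin n) K)ˣ) * Fintype.card (Fin n → K)) *
          (Fintype.card ((Matrix (Fin m) (Fin m) K)ˣ) * Fintype.card (Fin m → K)) by
      simp [Fintype.card_prod]]
    rw [hGL n, hGL m, hX, hY]
    ring
  rw [← hT]
  have hT0 : 0 < Fintype.card (EAT K n m) := Fintype.card_pos
  have hT0R : (0 : ℝ) < (Fintype.card (EAT K n m) : ℝ) := by exact_mod_cast hT0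
  -- fiber decomposition
  have hsum : Fintype.card ((Fin n → K) → (Fin m → K))
      = ∑ cc : Quotient s, Fintype.card {F // Quotient.mk s F = cc} := by
    rw [← Fintype.card_sigma]
    exact (Fintype.card_congr (Equiv.sigmaFiberEquiv (Quotient.mk s))).symm
  -- each fiber is covered by the group
  have key_fiber : ∀ cc : Quotient s,
      Fintype.card {F // Quotient.mk s F = cc} ≤ Fintype.card (EAT K n m) := by
    intro cc
    obtain ⟨F₀, rfl⟩ := Quotient.exists_rep cc
    have hsurj : Function.Surjective
        (fun g : EAT K n m =>
          (⟨EAct g F₀, Quotient.sound (Setoid.symm ((hs F₀ (EAct g F₀)).mpr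
            ⟨(g.1.1 : Matrix (Fin n) (Fin n) K), g.1.2, (g.2.1 : Matrix (Fin m) (Fin m) K),
              g.2.2, g.1.1.isUnit, g.2.1.isUnit, fun x => rfl⟩))⟩ :
            {F // Quotient.mk s F = Quotient.mk s F₀})) := by
      rintro ⟨G0, hG0⟩
      have h1 : s.r F₀ G0 := Setoid.symm (Quotient.exact hG0)
      obtain ⟨P, a, Q, b, hP, hQ, hact⟩ := (hs F₀ G0).mp h1
      refine ⟨((hP.unit, a), (hQ.unit, b)), ?_⟩
      apply Subtype.ext
      funext x
      simp only [EAct, IsUnit.unit_spec]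
      exact (hact x).symm
    exact Fintype.card_le_of_surjective _ hsurj
  -- lower bound
  have hlowN : q ^ (m * q ^ n) ≤ Nat.card (Quotient s) * Fintype.card (EAT K n m) := by
    rw [Nat.card_eq_fintype_card, ← hA, hsum]
    calc ∑ cc : Quotient s, Fintype.card {F // Quotient.mk s F = cc}
        ≤ ∑ _cc : Quotient s, Fintype.card (EAT K n m) :=
          Finset.sum_le_sum fun cc _ => key_fiber cc
      _ = Fintype.card (Quotient s) * Fintype.card (EAT K n m) := by
          rw [Finset.sum_const, Finset.card_univ, smul_eq_mul]
  -- the key fixed-point bound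
  have key_fix : ∀ g : EAT K n m, g ≠ EOne K n m →
      (Fintype.card {F : (Fin n → K) → (Fin m → K) // EAct g F = F} : ℝ)
        ≤ (q : ℝ) ^ (c * (m : ℝ) * (q : ℝ) ^ n) := by
    intro g hg
    obtain ⟨⟨P, a⟩, Q, b⟩ := g
    by_cases hPa : P = 1 ∧ a = 0
    · -- linear part on inputs is trivial; output transformation is nontrivial
      obtain ⟨rfl, rfl⟩ := hPa
      have hQb : ¬ (Q = 1 ∧ b = 0) := by
        rintro ⟨rfl, rfl⟩
        exact hg rfl
      have hiA : Fintype.card {F : (Fin n → K) → (Fin m → K) // EAct ((1, 0), (Q, b)) F = F}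
          ≤ Fintype.card ((Fin n → K) →
              {y : Fin m → K // (Q : Matrix (Fin m) (Fin m) K).mulVec y + b = y}) := by
        refine Fintype.card_le_of_injective (fun F x => ⟨F.1 x, ?_⟩) ?_
        · have h1 := congrFun F.2 x
          simp only [EAct, Units.val_one, Matrix.one_mulVec, add_zero] at h1
          exact h1
        · intro F F' h
          apply Subtype.ext
          funext x
          exact congrArg Subtype.val (congrFun h x)
      have hA0 : Nat.card {y : Fin m → K // (Q : Matrix (Fin m) (Fin m) K).mulVec y + b = y}
          ≤ q ^ (m - 1) :=
        aux_affine_card m _ b (fun h => hQb ⟨Units.val_eq_one.mp h.1, h.2⟩)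
      have hnat : Fintype.card {F : (Fin n → K) → (Fin m → K) // EAct ((1, 0), (Q, b)) F = F}
          ≤ q ^ ((m - 1) * q ^ n) := by
        calc Fintype.card {F : (Fin n → K) → (Fin m → K) // EAct ((1, 0), (Q, b)) F = F}
            ≤ Fintype.card ((Fin n → K) →
                {y : Fin m → K // (Q : Matrix (Fin m) (Fin m) K).mulVec y + b = y}) := hiA
          _ = Fintype.card {y : Fin m → K //
                (Q : Matrix (Fin m) (Fin m) K).mulVec y + b = y} ^ (q ^ n) := by
              rw [Fintype.card_fun, hX]
          _ ≤ (q ^ (m - 1)) ^ (q ^ n) := by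
              refine Nat.pow_le_pow_left ?_ _
              rw [← Nat.card_eq_fintype_card]
              exact hA0
          _ = q ^ ((m - 1) * q ^ n) := (pow_mul _ _ _).symm
      have hcast : (Fintype.card {F : (Fin n → K) → (Fin m → K) //
          EAct ((1, 0), (Q, b)) F = F} : ℝ) ≤ (q : ℝ) ^ ((((m - 1) * q ^ n : ℕ)) : ℝ) := by
        rw [Real.rpow_natCast]
        exact_mod_cast hnat
      refine hcast.trans (Real.rpow_le_rpow_of_exponent_le hq1 ?_)
      push_cast [Nat.cast_sub hm]
      have hmm : (1 - 1 / (m : ℝ)) * (m : ℝ) = (m : ℝ) - 1 := by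
        have hm0 : (m : ℝ) ≠ 0 := by
          have : (0 : ℝ) < (m : ℝ) := by exact_mod_cast hm.trans_lt' (by norm_num)
          exact this.ne'
        field_simp
      calc ((m : ℝ) - 1) * (q : ℝ) ^ n = (1 - 1 / (m : ℝ)) * (m : ℝ) * (q : ℝ) ^ n := by
            rw [hmm]
        _ ≤ c * (m : ℝ) * (q : ℝ) ^ n := by
            have h2 : (1 - 1 / (m : ℝ)) ≤ c := le_max_right _ _
            have hm0 : (0 : ℝ) ≤ (m : ℝ) := Nat.cast_nonneg m
            exact mul_le_mul_of_nonneg_right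
              (mul_le_mul_of_nonneg_right h2 hm0) (by positivity)
    · -- affine part on inputs is nontrivial
      have hPa' : ¬ ((P : Matrix (Fin n) (Fin n) K) = 1 ∧ a = 0) :=
        fun h => hPa ⟨Units.val_eq_one.mp h.1, h.2⟩
      set σ : Equiv.Perm (Fin n → K) :=
        ⟨fun x => (P : Matrix (Fin n) (Fin n) K).mulVec x + a,
         fun y => ((P⁻¹ : (Matrix (Fin n) (Fin n) K)ˣ) : Matrix (Fin n) (Fin n) K).mulVec (y - a),
         fun x => by
           simp only [add_sub_cancel_right, Matrix.mulVec_mulVec, ← Units.val_mul,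
             inv_mul_cancel, Units.val_one, Matrix.one_mulVec],
         fun y => by
           simp only [Matrix.mulVec_mulVec, ← Units.val_mul, mul_inv_cancel,
             Units.val_one, Matrix.one_mulVec, sub_add_cancel]⟩
        with hσdef
      set sc := Equiv.Perm.SameCycle.setoid σ with hscdef
      -- the fixed functions are determined by their values on orbit representatives
      have hdet : Fintype.card {F : (Fin n → K) → (Fin m → K) // EAct ((P, a), (Q, b)) F = F}
          ≤ Fintype.card (Quotient sc → (Fin m → K)) := by
        refine Fintype.card_le_of_injective
          (fun F (cc : Quotient sc) => F.1 cc.out) ?_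
        intro F F' h
        apply Subtype.ext
        refine aux_fix_inj σ (fun y => (Q : Matrix (Fin m) (Fin m) K).mulVec y + b)
          ?_ F.1 F'.1 ?_ ?_ (fun cc => congrFun h cc)
        · intro y y' hyy
          exact Matrix.mulVec_injective_iff_isUnit.mpr Q.isUnit (add_right_cancel hyy)
        · intro x
          exact (congrFun F.2 x).symm
        · intro x
          exact (congrFun F'.2 x).symm
      -- counting the orbits
      have hfixσ : Nat.card {x : Fin n → K // σ x = x} ≤ q ^ (n - 1) := by
        have e : Nat.card {x : Fin n → K // σ x = x}
            = Nat.card {x : Fin n → K // (P : Matrix (Fin n) (Fin n) K).mulVec x + a = x} :=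
          Nat.card_congr (Equiv.subtypeEquivRight (fun x => Iff.rfl))
        rw [e]
        exact aux_affine_card n _ a hPa'
      have h2t : 2 * Fintype.card (Quotient sc) ≤ q ^ n + q ^ (n - 1) := by
        have h := aux_orbit_bound σ
        rw [Nat.card_eq_fintype_card (α := Quotient sc)] at h
        refine h.trans ?_
        rw [hX]
        exact Nat.add_le_add_left hfixσ _
      have hnat : Fintype.card {F : (Fin n → K) → (Fin m → K) // EAct ((P, a), (Q, b)) F = F}
          ≤ q ^ (m * Fintype.card (Quotient sc)) := by
        refine hdet.trans ?_
        rw [Fintype.card_fun, hY, ← pow_mul]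
      have hcast : (Fintype.card {F : (Fin n → K) → (Fin m → K) //
          EAct ((P, a), (Q, b)) F = F} : ℝ)
          ≤ (q : ℝ) ^ (((m * Fintype.card (Quotient sc) : ℕ)) : ℝ) := by
        rw [Real.rpow_natCast]
        exact_mod_cast hnat
      refine hcast.trans (Real.rpow_le_rpow_of_exponent_le hq1 ?_)
      set t := Fintype.card (Quotient sc) with htdef
      have hpowq : (q : ℝ) ^ (n - 1) * (q : ℝ) = (q : ℝ) ^ n := by
        rw [← pow_succ]
        congr 1
        omega
      have h2tR : 2 * (t : ℝ) ≤ (q : ℝ) ^ n + (q : ℝ) ^ (n - 1) := by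
        exact_mod_cast h2t
      have hc1 : ((q : ℝ) + 1) / (2 * (q : ℝ)) ≤ c := le_max_left _ _
      have hq0' : (q : ℝ) ≠ 0 := hq0R.ne'
      have e1 : ((q : ℝ) + 1) / (2 * (q : ℝ)) * (m : ℝ) * (q : ℝ) ^ n
          = (m : ℝ) * (((q : ℝ) ^ n + (q : ℝ) ^ (n - 1)) / 2) := by
        rw [← hpowq]
        field_simp
      push_cast
      calc (m : ℝ) * (t : ℝ) ≤ (m : ℝ) * (((q : ℝ) ^ n + (q : ℝ) ^ (n - 1)) / 2) := by
            refine mul_le_mul_of_nonneg_left ?_ (Nat.cast_nonneg m)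
            linarith
        _ = ((q : ℝ) + 1) / (2 * (q : ℝ)) * (m : ℝ) * (q : ℝ) ^ n := e1.symm
        _ ≤ c * (m : ℝ) * (q : ℝ) ^ n :=
            mul_le_mul_of_nonneg_right
              (mul_le_mul_of_nonneg_right hc1 (Nat.cast_nonneg m)) (by positivity)
  -- bad classes: those containing a function with nontrivial stabilizer
  set bad : Quotient s → Prop := fun cc =>
    ∃ F, Quotient.mk s F = cc ∧ ∃ g : EAT K n m, g ≠ EOne K n m ∧ EAct g F = F with hbaddef
  have key_good : ∀ cc : Quotient s, ¬ bad cc →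
      Fintype.card (EAT K n m) ≤ Fintype.card {F // Quotient.mk s F = cc} := by
    intro cc hcc
    obtain ⟨F₀, rfl⟩ := Quotient.exists_rep cc
    have hstab : ∀ k : EAT K n m, EAct k F₀ = F₀ → k = EOne K n m := by
      intro k hk
      by_contra hkne
      exact hcc ⟨F₀, rfl, k, hkne, hk⟩
    refine Fintype.card_le_of_injective
      (fun g : EAT K n m =>
        (⟨EAct g F₀, Quotient.sound (Setoid.symm ((hs F₀ (EAct g F₀)).mpr
          ⟨(g.1.1 : Matrix (Fin n) (Fin n) K), g.1.2, (g.2.1 : Matrix (Fin m) (Fin m) K),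
            g.2.2, g.1.1.isUnit, g.2.1.isUnit, fun x => rfl⟩))⟩ :
          {F // Quotient.mk s F = Quotient.mk s F₀})) ?_
    intro g h hgh
    exact eact_cancel hstab (congrArg Subtype.val hgh)
  have key_bad : Fintype.card {cc : Quotient s // bad cc}
      ≤ Fintype.card {F : (Fin n → K) → (Fin m → K) //
          ∃ g : EAT K n m, g ≠ EOne K n m ∧ EAct g F = F} := by
    have hch : ∀ cc : {cc : Quotient s // bad cc},
        ∃ F, Quotient.mk s F = cc.1 ∧ ∃ g : EAT K n m, g ≠ EOne K n m ∧ EAct g F = F :=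
      fun cc => cc.2
    choose f hf1 hf2 using hch
    refine Fintype.card_le_of_injective (fun cc => ⟨f cc, hf2 cc⟩) ?_
    intro c₁ c₂ h
    have h4 : f c₁ = f c₂ := congrArg Subtype.val h
    apply Subtype.ext
    rw [← hf1 c₁, ← hf1 c₂, h4]
  have key_S : Fintype.card {F : (Fin n → K) → (Fin m → K) //
        ∃ g : EAT K n m, g ≠ EOne K n m ∧ EAct g F = F}
      ≤ ∑ g : {g : EAT K n m // g ≠ EOne K n m},
          Fintype.card {F : (Fin n → K) → (Fin m → K) // EAct g.1 F = F} := by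
    rw [← Fintype.card_sigma]
    refine Fintype.card_le_of_surjective
      (fun p : Σ g : {g : EAT K n m // g ≠ EOne K n m},
        {F : (Fin n → K) → (Fin m → K) // EAct g.1 F = F} =>
        ⟨p.2.1, p.1.1, p.1.2, p.2.2⟩) ?_
    rintro ⟨F, g, hg, hF⟩
    exact ⟨⟨⟨g, hg⟩, ⟨F, hF⟩⟩, rfl⟩
  have hB0 : (0 : ℝ) ≤ (q : ℝ) ^ (c * (m : ℝ) * (q : ℝ) ^ n) := Real.rpow_nonneg hq0R.le _
  constructor
  · rw [div_le_iff₀ hT0R]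
    exact_mod_cast hlowN
  · have hsplit : Nat.card (Quotient s)
        = Fintype.card {cc : Quotient s // bad cc} + Fintype.card {cc : Quotient s // ¬ bad cc} := by
      rw [Nat.card_eq_fintype_card, ← Fintype.card_sum]
      exact (Fintype.card_congr (Equiv.sumCompl bad)).symm
    have hgood : (Fintype.card {cc : Quotient s // ¬ bad cc} : ℝ)
        ≤ (q : ℝ) ^ (m * q ^ n) / (Fintype.card (EAT K n m) : ℝ) := by
      rw [le_div_iff₀ hT0R]
      have hnat2 : Fintype.card {cc : Quotient s // ¬ bad cc} * Fintype.card (EAT K n m)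
          ≤ q ^ (m * q ^ n) := by
        rw [← hA, hsum]
        calc Fintype.card {cc : Quotient s // ¬ bad cc} * Fintype.card (EAT K n m)
            = ∑ _cc ∈ Finset.univ.filter (fun cc : Quotient s => ¬ bad cc),
                Fintype.card (EAT K n m) := by
              rw [Finset.sum_const, smul_eq_mul, Fintype.card_subtype]
          _ ≤ ∑ cc ∈ Finset.univ.filter (fun cc : Quotient s => ¬ bad cc),
                Fintype.card {F // Quotient.mk s F = cc} :=
              Finset.sum_le_sum fun cc hcc =>
                key_good cc (Finset.mem_filter.mp hcc).2
          _ ≤ ∑ cc : Quotient s, Fintype.card {F // Quotient.mk s F = cc} :=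
              Finset.sum_le_sum_of_subset (Finset.filter_subset _ _)
      exact_mod_cast hnat2
    have hbadR : (Fintype.card {cc : Quotient s // bad cc} : ℝ)
        ≤ (Fintype.card (EAT K n m) : ℝ) * (q : ℝ) ^ (c * (m : ℝ) * (q : ℝ) ^ n) := by
      calc (Fintype.card {cc : Quotient s // bad cc} : ℝ)
          ≤ ((∑ g : {g : EAT K n m // g ≠ EOne K n m},
              Fintype.card {F : (Fin n → K) → (Fin m → K) // EAct g.1 F = F} : ℕ) : ℝ) := by
            exact_mod_cast key_bad.trans key_S
        _ = ∑ g : {g : EAT K n m // g ≠ EOne K n m},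
              (Fintype.card {F : (Fin n → K) → (Fin m → K) // EAct g.1 F = F} : ℝ) := by
            push_cast
            rfl
        _ ≤ ∑ _g : {g : EAT K n m // g ≠ EOne K n m},
              (q : ℝ) ^ (c * (m : ℝ) * (q : ℝ) ^ n) :=
            Finset.sum_le_sum fun g _ => key_fix g.1 g.2
        _ = (Fintype.card {g : EAT K n m // g ≠ EOne K n m} : ℝ)
              * (q : ℝ) ^ (c * (m : ℝ) * (q : ℝ) ^ n) := by
            rw [Finset.sum_const, Finset.card_univ, nsmul_eq_mul]
        _ ≤ (Fintype.card (EAT K n m) : ℝ) * (q : ℝ) ^ (c * (m : ℝ) * (q : ℝ) ^ n) := by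
            refine mul_le_mul_of_nonneg_right ?_ hB0
            exact_mod_cast Fintype.card_subtype_le _
    rw [hsplit]
    push_cast
    linarith
end
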